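/- Comparison of bounds: Let G be a finite simple bipartite graph without isolated vertices, with parts L and R. For each d in the set D_L of degrees occurring among vertices of L, let L_d be the set of vertices of L of degree d, and let R_d be the set of vertices of R adjacent to at least one vertex of L_d. Then Π_{d ∈ D_L} Π_{r ∈ R_d} (2^d + 2^{d(r)} − 1)^{1/d} ≥ Π_{{u,v} ∈ E(G)} (2^{d(u)} + 2^{d(v)} − 1)^{1/(d(u)·d(v))}, i.e., the bound of the present paper is in general at least as large as the Sah–Sawhney–Stoner–Zhao bound. -/

import Mathlib

open Finset

/-- The weight `(2^(d(u)) + 2^(d(v)) - 1)^(1/(d(u)·d(v)))` attached to an edge `{u, v}`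
of the graph `G`, as a symmetric function on `Sym2 V`. -/
noncomputable def edgeWeight {V : Type*} (G : SimpleGraph V)
    [∀ v, Fintype (G.neighborSet v)] : Sym2 V → ℝ :=
  Sym2.lift
    ⟨fun u v => ((2 : ℝ) ^ (G.degree u) + 2 ^ (G.degree v) - 1) ^
        (1 / ((G.degree u : ℝ) * (G.degree v : ℝ))),
      fun u v => by
        dsimp only
        rw [add_comm ((2 : ℝ) ^ (G.degree u)) ((2 : ℝ) ^ (G.degree v)),
          mul_comm ((G.degree u : ℝ)) ((G.degree v : ℝ))]⟩

private lemma base_one_le (a b : ℕ) (hb : 0 < b) : (1 : ℝ) ≤ 2 ^ a + 2 ^ b - 1 := by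
  have h1 : (1 : ℝ) ≤ 2 ^ a := one_le_pow₀ one_le_two
  have h2 : (2 : ℝ) ≤ 2 ^ b := by
    calc (2:ℝ) = 2 ^ 1 := (pow_one 2).symm
    _ ≤ 2 ^ b := pow_le_pow_right₀ one_le_two hb
  linarith

/-- **Comparison of bounds.** For a finite simple bipartite graph `G` without isolated
vertices, with parts `L` and `R`, the bound of the present paper,
`∏_{d ∈ D_L} ∏_{r ∈ R_d} (2^d + 2^(d(r)) - 1)^(1/d)`, is at least as large as the
Sah–Sawhney–Stoner–Zhao bound
`∏_{{u,v} ∈ E(G)} (2^(d(u)) + 2^(d(v)) - 1)^(1/(d(u)·d(v)))`. -/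
theorem bound_comparison {V : Type*} [Fintype V] [DecidableEq V]
    (G : SimpleGraph V) [DecidableRel G.Adj] (L R : Finset V)
    (hdisj : Disjoint L R) (hunion : L ∪ R = Finset.univ)
    (hbip : ∀ u v, G.Adj u v → (u ∈ L ∧ v ∈ R) ∨ (u ∈ R ∧ v ∈ L))
    (hiso : ∀ v : V, 0 < G.degree v) :
    ∏ d ∈ L.image (fun v => G.degree v),
        ∏ r ∈ R.filter (fun r => ∃ l ∈ L, G.degree l = d ∧ G.Adj l r),
          ((2 : ℝ) ^ d + 2 ^ (G.degree r) - 1) ^ (1 / (d : ℝ)) ≥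
      ∏ e ∈ G.edgeFinset, edgeWeight G e := by
  classical
  set f : V × V → ℝ := fun p => ((2 : ℝ) ^ G.degree p.1 + 2 ^ G.degree p.2 - 1) ^
      (1 / ((G.degree p.1 : ℝ) * (G.degree p.2 : ℝ))) with hf
  set P : Finset (V × V) := (L ×ˢ R).filter (fun p => G.Adj p.1 p.2) with hP
  have hfnn : ∀ p : V × V, 0 ≤ f p := by
    intro p
    exact Real.rpow_nonneg (by linarith [base_one_le (G.degree p.1) (G.degree p.2) (hiso p.2)]) _
  have hedge : ∏ e ∈ G.edgeFinset, edgeWeight G e = ∏ p ∈ P, f p := by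
    refine (Finset.prod_bij (fun p _ => Sym2.mk p.1 p.2) ?_ ?_ ?_ ?_ :
      ∏ p ∈ P, f p = ∏ e ∈ G.edgeFinset, edgeWeight G e).symm
    · rintro ⟨l, r⟩ hp
      simp only [hP, Finset.mem_filter] at hp
      exact SimpleGraph.mem_edgeFinset.mpr hp.2
    · rintro ⟨a, b⟩ ha ⟨c, d⟩ hc h
      simp only [hP, Finset.mem_filter, Finset.mem_product] at ha hc
      rcases Sym2.mk_eq_mk_iff.mp h with h | h
      · exact h
      · exfalso
        have h1 : a = d := (Prod.mk.injEq _ _ _ _ ▸ h).1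
        exact Finset.disjoint_left.mp hdisj ha.1.1 (h1 ▸ hc.1.2)
    · intro e he
      rw [SimpleGraph.mem_edgeFinset] at he
      induction e with
      | h u v =>
        have hadj : G.Adj u v := he
        rcases hbip u v hadj with ⟨hu, hv⟩ | ⟨hu, hv⟩
        · exact ⟨(u, v), by simp [hP, hu, hv, hadj], rfl⟩
        · exact ⟨(v, u), by simp [hP, hu, hv, hadj.symm], Sym2.eq_swap⟩
    · rintro ⟨l, r⟩ hp
      simp [edgeWeight, hf]
  rw [hedge, ge_iff_le]
  set D := L.image (fun v => G.degree v) with hD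
  have hmaps : ∀ p ∈ P, (G.degree p.1, p.2) ∈ D ×ˢ R := by
    rintro ⟨l, r⟩ hp
    simp only [hP, Finset.mem_filter, Finset.mem_product] at hp
    simp only [Finset.mem_product, hD, Finset.mem_image]
    exact ⟨⟨l, hp.1.1, rfl⟩, hp.1.2⟩
  rw [← Finset.prod_fiberwise_of_maps_to hmaps f, Finset.prod_product]
  refine Finset.prod_le_prod
    (fun d _ => Finset.prod_nonneg fun r _ => Finset.prod_nonneg fun p _ => hfnn p)
    (fun d hd => ?_)
  rw [Finset.prod_filter]
  refine Finset.prod_le_prod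
    (fun r _ => Finset.prod_nonneg fun p _ => hfnn p) (fun r hr => ?_)
  set F := P.filter (fun p => (G.degree p.1, p.2) = (d, r)) with hF
  have hFmem : ∀ p ∈ F, p.1 ∈ L ∧ G.degree p.1 = d ∧ p.2 = r ∧ G.Adj p.1 r := by
    rintro ⟨l, r'⟩ hp
    simp only [hF, hP, Finset.mem_filter, Finset.mem_product, Prod.mk.injEq] at hp
    obtain ⟨⟨⟨hl, _⟩, hadj⟩, hdeg, hr'⟩ := hp
    exact ⟨hl, hdeg, hr', hr' ▸ hadj⟩
  set c : ℝ := (2 : ℝ) ^ d + 2 ^ (G.degree r) - 1 with hc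
  have hc1 : (1 : ℝ) ≤ c := base_one_le d (G.degree r) (hiso r)
  by_cases hpred : ∃ l ∈ L, G.degree l = d ∧ G.Adj l r
  · rw [if_pos hpred]
    obtain ⟨l₀, hl₀, hdl₀, _⟩ := hpred
    have hdpos : 0 < d := hdl₀ ▸ hiso l₀
    have hFconst : ∀ p ∈ F, f p = c ^ (1 / ((d : ℝ) * (G.degree r : ℝ))) := by
      intro p hp
      obtain ⟨_, hdeg, hr', _⟩ := hFmem p hp
      simp only [hf, hc]
      rw [hdeg, hr']
    rw [Finset.prod_congr rfl hFconst, Finset.prod_const, ← Real.rpow_natCast _ F.card,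
      ← Real.rpow_mul (by linarith)]
    apply Real.rpow_le_rpow_of_exponent_le hc1
    have hcard : F.card ≤ G.degree r := by
      rw [← SimpleGraph.card_neighborFinset_eq_degree]
      apply Finset.card_le_card_of_injOn (fun p => p.1)
      · intro p hp
        obtain ⟨_, _, _, hadj⟩ := hFmem p hp
        exact (G.mem_neighborFinset r p.1).mpr hadj.symm
      · intro p hp q hq hpq
        obtain ⟨_, _, hp2, _⟩ := hFmem p hp
        obtain ⟨_, _, hq2, _⟩ := hFmem q hq
        exact Prod.ext hpq (hp2.trans hq2.symm)
    have hdr : (0:ℝ) < (G.degree r : ℝ) := by exact_mod_cast hiso r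
    have hd : (0:ℝ) < (d : ℝ) := by exact_mod_cast hdpos
    have hcast : (F.card : ℝ) ≤ (G.degree r : ℝ) := by exact_mod_cast hcard
    rw [div_mul_eq_mul_div, one_mul, div_le_div_iff₀ (by positivity) hd]
    nlinarith
  · rw [if_neg hpred]
    have hFempty : F = ∅ := by
      rw [Finset.eq_empty_iff_forall_notMem]
      intro p hp
      obtain ⟨hl, hdeg, _, hadj⟩ := hFmem p hp
      exact hpred ⟨p.1, hl, hdeg, hadj⟩
    rw [hFempty, Finset.prod_empty]
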